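/- Let X ⊆ Y be topological spaces and α < ω₁. The following are equivalent: (i) X ∈ F_α(Y); (ii) H(∅) = X for some l(T)-scheme H whose sets are closed in Y, where T is a well-founded tree with r_l(T) ≤ α; (iii) H(∅) = X for some closed l(T_α)-scheme H in Y; (iv) the scheme of closures H̄^Y, defined by H̄^Y(t) = cl_Y(H(t)∩X), satisfies H̄^Y(∅) = X for some l(T)-scheme H of subsets of X with r_l(T) ≤ α; (v) H̄^Y(∅) = X for some l(T_α)-scheme H of subsets of X. -/

import Mathlib

noncomputable section
open Classical Set Topology Filter Ordinal

universe u v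

namespace FBorelPaper

/-! ### Ordinal parity -/

/-- The first uncountable ordinal. -/
def omega1 : Ordinal.{0} := Ordinal.omega 1

/-- An ordinal `a = λ + m` (with `λ` limit or zero, `m < ω`) is *even* iff `m` is even. -/
def EvenOrd (a : Ordinal.{0}) : Prop := a % 2 = 0

/-- An ordinal `a = λ + m` (with `λ` limit or zero, `m < ω`) is *odd* iff `m` is odd. -/
def OddOrd (a : Ordinal.{0}) : Prop := a % 2 = 1

/-- For `a = λ + 2n + i` (with `λ` limit or zero, `n < ω`, `i ∈ {0,1}`),
`ordPrime a = λ + n` (the ordinal `α'` of the paper). -/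
def ordPrime (a : Ordinal.{0}) : Ordinal.{0} :=
  Ordinal.omega0 * (a / Ordinal.omega0) + (a % Ordinal.omega0) / 2

/-! ### The F-Borel hierarchy -/

/-- The `F`-Borel hierarchy of a topological space: `FBorel Y 0` is the family of closed
sets, and for `0 < a`, `FBorel Y a` consists of all countable unions (for odd `a`),
resp. countable intersections (for even `a`), of members of `⋃ b < a, FBorel Y b`. -/
def FBorel (Y : Type u) [TopologicalSpace Y] : Ordinal.{0} → Set (Set Y) :=
  WellFounded.fix Ordinal.lt_wf (C := fun _ => Set (Set Y)) fun a ih =>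
    if a = 0 then { F | IsClosed F }
    else if EvenOrd a then
      { S | ∃ f : ℕ → Set Y, (∀ n, ∃ b, ∃ h : b < a, f n ∈ ih b h) ∧ S = ⋂ n, f n }
    else
      { S | ∃ f : ℕ → Set Y, (∀ n, ∃ b, ∃ h : b < a, f n ∈ ih b h) ∧ S = ⋃ n, f n }

/-- The list `(σ 0, …, σ (k-1))` of the first `k` values of `σ : ℕ → ℕ`. -/
def seqPrefix (σ : ℕ → ℕ) (k : ℕ) : List ℕ := List.ofFn fun i : Fin k => σ i

/-- A Suslin scheme: a monotone family of sets indexed by finite sequences. -/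
def IsSuslinScheme {Y : Type u} (C : List ℕ → Set Y) : Prop :=
  ∀ ⦃s t : List ℕ⦄, s <+: t → C t ⊆ C s

/-- The Suslin operation `A(C) = ⋃_{σ ∈ ω^ω} ⋂_k C(σ|k)`. -/
def suslinOp {Y : Type u} (C : List ℕ → Set Y) : Set Y :=
  ⋃ σ : ℕ → ℕ, ⋂ k : ℕ, C (seqPrefix σ k)

/-- The Suslin-F subsets of `Y`: results of the Suslin operation applied to schemes of
closed sets. -/
def SuslinF (Y : Type u) [TopologicalSpace Y] : Set (Set Y) :=
  { S | ∃ C : List ℕ → Set Y, (∀ s, IsClosed (C s)) ∧ S = suslinOp C }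

/-- The classes `F_a(Y)` for `a ≤ ω₁`, where `F_{ω₁}(Y)` is the class of Suslin-F sets. -/
def FClass (Y : Type u) [TopologicalSpace Y] (a : Ordinal.{0}) : Set (Set Y) :=
  if a < omega1 then FBorel Y a else SuslinF Y

/-- `ComplIn Y X` is the complexity of `X` in `Y`: the least `a ≤ ω₁` with `X ∈ F_a(Y)`. -/
def ComplIn (Y : Type u) [TopologicalSpace Y] (X : Set Y) : Ordinal.{0} :=
  sInf { a : Ordinal.{0} | a ≤ omega1 ∧ X ∈ FClass Y a }

/-! ### Compactifications, K-analytic spaces, local complexity -/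

/-- `(K, e)` is a compactification of `X`: `K` is compact Hausdorff and `e` is a dense
embedding of `X` into `K`. -/
def IsCompactification (X : Type u) [TopologicalSpace X] (K : Type u) [TopologicalSpace K]
    (e : X → K) : Prop :=
  CompactSpace K ∧ T2Space K ∧ IsEmbedding e ∧ DenseRange e

/-- The set `Compl(X)` of all complexities attained by `X` in its compactifications. -/
def AttainedCompl (X : Type u) [TopologicalSpace X] : Set Ordinal.{0} :=
  { γ | ∃ (K : Type u) (_ : TopologicalSpace K) (e : X → K),
      IsCompactification X K e ∧ Set.range e ∈ SuslinF K ∧ γ = ComplIn K (Set.range e) }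

/-- A topological space is K-analytic iff it embeds as a Suslin-F subset of some compact
Hausdorff space. -/
def IsKAnalytic (X : Type u) [TopologicalSpace X] : Prop :=
  ∃ (K : Type u) (_ : TopologicalSpace K) (e : X → K),
    CompactSpace K ∧ T2Space K ∧ IsEmbedding e ∧ Set.range e ∈ SuslinF K

/-- The local complexity `Compl_y(X, Y)`: the least complexity of `cl(U) ∩ X` in `Y` over
all open neighborhoods `U` of `y` in `Y`. -/
def locComplAt (Y : Type u) [TopologicalSpace Y] (X : Set Y) (y : Y) : Ordinal.{0} :=
  sInf { γ : Ordinal.{0} | ∃ U : Set Y, IsOpen U ∧ y ∈ U ∧ γ = ComplIn Y (closure U ∩ X) }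

/-- The local complexity `Compl_loc(X, Y) = sup_{x ∈ X} Compl_x(X, Y)`. -/
def locCompl (Y : Type u) [TopologicalSpace Y] (X : Set Y) : Ordinal.{0} :=
  ⨆ x : X, locComplAt Y X (x : Y)

/-- The local complexity `Compl_locbar(X, Y) = sup_{y ∈ Y} Compl_y(X, Y)`. -/
def locComplBar (Y : Type u) [TopologicalSpace Y] (X : Set Y) : Ordinal.{0} :=
  ⨆ y : Y, locComplAt Y X y

/-! ### Trees on ω -/

/-- A tree on `ω`: a set of finite sequences closed under initial segments. -/
def IsTree (T : Set (List ℕ)) : Prop := ∀ ⦃s t : List ℕ⦄, s <+: t → t ∈ T → s ∈ T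

/-- A tree is well-founded iff it carries no infinite branch. -/
def WellFoundedTree (T : Set (List ℕ)) : Prop := ¬ ∃ σ : ℕ → ℕ, ∀ k : ℕ, seqPrefix σ k ∈ T

/-- `t` is a leaf of `T`: it belongs to `T` and has no immediate successor in `T`. -/
def IsLeafOf (T : Set (List ℕ)) (t : List ℕ) : Prop := t ∈ T ∧ ∀ n : ℕ, t ++ [n] ∉ T

/-- The tree `T^t = {s | t⌢s ∈ T}` corresponding to `t` in `T`. -/
def subtreeAt (T : Set (List ℕ)) (t : List ℕ) : Set (List ℕ) := { s | t ++ s ∈ T }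

/-- The smallest tree containing a set `S` of finite sequences. -/
def clTr (S : Set (List ℕ)) : Set (List ℕ) := { u | ∃ s ∈ S, u <+: s }

/-- The leaf derivative: keep the elements having some proper extension in `T`. -/
def leafDeriv (T : Set (List ℕ)) : Set (List ℕ) := { t ∈ T | ∃ s ∈ T, t <+: s ∧ t ≠ s }

/-- The derivative `D_iie`: keep the `t ∈ T` admitting infinitely many pairwise
incomparable extensions in `T` of pairwise different lengths. -/
def Diie (T : Set (List ℕ)) : Set (List ℕ) :=
  { t ∈ T | ∃ g : ℕ → List ℕ, (∀ n, g n ∈ T ∧ t <+: g n) ∧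
      ∀ ⦃m n : ℕ⦄, m < n →
        (¬ g m <+: g n) ∧ (¬ g n <+: g m) ∧ (g m).length ≠ (g n).length }

/-- Transfinitely iterated derivative, starting from `cl_Tr S` and taking intersections
at limit stages. -/
def iterDeriv (D : Set (List ℕ) → Set (List ℕ)) (S : Set (List ℕ)) (γ : Ordinal.{0}) :
    Set (List ℕ) :=
  Ordinal.limitRecOn γ (clTr S) (fun _ ih => D ih)
    (fun a _ ih => ⋂ b : Ordinal.{0}, ⋂ h : b < a, ih b h)

/-- The rank associated with the leaf derivative: the least `γ` such that the `(γ+1)`-st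
iterated leaf derivative is empty, and `ω₁` if there is no such countable ordinal. -/
def leafRank (T : Set (List ℕ)) : Ordinal.{0} :=
  if ∃ γ : Ordinal.{0}, γ < omega1 ∧ iterDeriv leafDeriv T (γ + 1) = ∅ then
    sInf { γ : Ordinal.{0} | iterDeriv leafDeriv T (γ + 1) = ∅ }
  else omega1

/-- `E` is the canonical extension of the `l(T)`-scheme `H` to the whole of `T`:
it agrees with `H` on the leaves of `T`, and at a non-leaf `t ∈ T` it is the union
(resp. the intersection) of its values at the immediate successors of `t` in `T` when
the leaf-rank of `T^t` is odd (resp. even). -/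
def IsSchemeExtension (Y : Type u) [TopologicalSpace Y] (T : Set (List ℕ))
    (H E : List ℕ → Set Y) : Prop :=
  (∀ t, IsLeafOf T t → E t = H t) ∧
  (∀ t ∈ T, ¬ IsLeafOf T t → OddOrd (leafRank (subtreeAt T t)) →
      E t = ⋃ n ∈ { n : ℕ | t ++ [n] ∈ T }, E (t ++ [n])) ∧
  (∀ t ∈ T, ¬ IsLeafOf T t → EvenOrd (leafRank (subtreeAt T t)) →
      E t = ⋂ n ∈ { n : ℕ | t ++ [n] ∈ T }, E (t ++ [n]))

/-- `H` (an `l(T)`-scheme of subsets of `X`) is a *universal simple `F_α`-representation*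
of `X`: `r_l(T) ≤ α`, and for every space `Y` containing (a copy of) `X`, the extension
of the scheme of closures `(cl_Y (H t))_t` computes `X` at the root. -/
def HasUniversalSimpleRep (X : Type u) [TopologicalSpace X] (α : Ordinal.{0}) : Prop :=
  ∃ (T : Set (List ℕ)) (H : List ℕ → Set X), IsTree T ∧ WellFoundedTree T ∧ [] ∈ T ∧
    leafRank T ≤ α ∧
    ∀ (Y : Type u) (_ : TopologicalSpace Y) (e : X → Y), IsEmbedding e →
      ∃ E : List ℕ → Set Y,
        IsSchemeExtension Y T (fun t => closure (e '' H t)) E ∧ E [] = Set.range e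

/-! ### Canonical trees -/

/-- Auxiliary indices for the canonical trees: at a successor `a = b + 1` every index is
`b`, and at a countable limit the indices enumerate all ordinals `< a` injectively. -/
def canonIdx (a : Ordinal.{0}) (n : ℕ) : Ordinal.{0} :=
  if hs : ∃ b, a = b + 1 then hs.choose
  else if hf : ∃ f : ℕ → Ordinal.{0}, Function.Injective f ∧ Set.range f = Set.Iio a then
    hf.choose n
  else 0

theorem canonIdx_lt {a : Ordinal.{0}} (h0 : a ≠ 0) (n : ℕ) : canonIdx a n < a := by
  unfold canonIdx
  split
  · next hs =>
      conv_rhs => rw [hs.choose_spec]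
      rw [Ordinal.add_one_eq_succ]
      exact Order.lt_succ _
  · split
    · next hf =>
        have hmem : hf.choose n ∈ Set.range hf.choose := Set.mem_range_self n
        rw [hf.choose_spec.2] at hmem
        exact hmem
    · first
        | exact pos_iff_ne_zero.mpr h0
        | exact lt_of_le_of_ne (zero_le _) (Ne.symm h0)

/-- The canonical "maximal" trees `T_α` of leaf-rank `α < ω₁` (with `T_α = ω^{<ω}` for
`α ≥ ω₁`): `T_0 = {∅}`, `T_{α+1} = {∅} ∪ ⋃_n n⌢T_α`, and at countable limits
`T_α = {∅} ∪ ⋃_n n⌢T_{π_α(n)}` for an injective enumeration `π_α` of `α`. -/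
def canonTree : Ordinal.{0} → Set (List ℕ) :=
  WellFounded.fix Ordinal.lt_wf (C := fun _ => Set (List ℕ)) fun a ih =>
    if h0 : a = 0 then {([] : List ℕ)}
    else if omega1 ≤ a then Set.univ
    else {([] : List ℕ)} ∪ ⋃ n : ℕ, (List.cons n) '' ih (canonIdx a n) (canonIdx_lt h0 n)

/-- The canonical trees `T^c_α`: `T_{α'}` for even `α`, and `{∅} ∪ 1⌢T_{α'}` for odd `α`. -/
def canonTreeC (a : Ordinal.{0}) : Set (List ℕ) :=
  if EvenOrd a then canonTree (ordPrime a)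
  else {([] : List ℕ)} ∪ (List.cons 1) '' canonTree (ordPrime a)

/-- The canonical trees `T^c_{α,i} = {∅} ∪ i⌢T_{α'}` (for odd `α`). -/
def canonTreeCi (a : Ordinal.{0}) (i : ℕ) : Set (List ℕ) :=
  {([] : List ℕ)} ∪ (List.cons i) '' canonTree (ordPrime a)

/-! ### Admissible maps, `R_T` and regular representations -/

/-- An admissible map on a tree `T`: monotone w.r.t. extension, with
`|φ(t)| = t(0) + ⋯ + t(|t|-1)` for all `t ∈ T`. -/
def Admissible (T : Set (List ℕ)) (φ : List ℕ → List ℕ) : Prop :=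
  (∀ ⦃s t : List ℕ⦄, s ∈ T → t ∈ T → s <+: t → φ s <+: φ t) ∧
  (∀ t ∈ T, (φ t).length = t.sum)

/-- `R_T(C)`: the points of `C(∅)` admitting an admissible witness map along `T`. -/
def RT {Y : Type u} (T : Set (List ℕ)) (C : List ℕ → Set Y) : Set Y :=
  { x | x ∈ C [] ∧ ∃ φ : List ℕ → List ℕ, Admissible T φ ∧ ∀ t ∈ T, x ∈ C (φ t) }

/-- `R_α(C) = R_{T^c_α}(C)`. -/
def Ralpha {Y : Type u} (a : Ordinal.{0}) (C : List ℕ → Set Y) : Set Y :=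
  RT (canonTreeC a) C

/-- A Suslin scheme `C` of subsets of `X ⊆ Y` is *complete on `X`*: it is a Suslin scheme
on `X` (it consists of subsets of `X` and the Suslin operation applied to it covers `X`)
such that every nontrivial filter containing, for each `n`, a set `C s` with `|s| = n`,
has an accumulation point in `X`. -/
def IsCompleteOn (Y : Type u) [TopologicalSpace Y] (X : Set Y) (C : List ℕ → Set Y) :
    Prop :=
  IsSuslinScheme C ∧ (∀ s, C s ⊆ X) ∧ X ⊆ suslinOp C ∧
  ∀ F : Filter Y, F.NeBot → (∀ n : ℕ, ∃ s : List ℕ, s.length = n ∧ C s ∈ F) →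
    ∃ x ∈ X, ClusterPt x F

/-- The tree `S_C(y)` of finite sequences `s` with `y ∈ cl_Y (C s)`. -/
def SCtree (Y : Type u) [TopologicalSpace Y] (C : List ℕ → Set Y) (y : Y) :
    Set (List ℕ) :=
  { s : List ℕ | y ∈ closure (C s) }

/-! ### Zoom spaces -/

/-- The set of isolated points of a topological space. -/
def IsolPts (Y : Type u) [TopologicalSpace Y] : Set Y := { y | IsOpen ({y} : Set Y) }

/-- The underlying set of the zoom space `Z(Y, X)`: the non-isolated points of `Y`
together with the disjoint union of the spaces `X i`, `i ∈ I_Y`. -/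
def ZoomCarrier (Y : Type u) [TopologicalSpace Y] (X : IsolPts Y → Type v) :
    Type (max u v) :=
  ({ y : Y // y ∉ IsolPts Y }) ⊕ ((i : IsolPts Y) × X i)

/-- The basic set `V_U ⊆ Z(Y, X)` associated with `U ⊆ Y`:
`V_U = (U ∖ I_Y) ∪ ⋃ {X i | i ∈ U ∩ I_Y}`. -/
def zoomVSet (Y : Type u) [TopologicalSpace Y] (X : IsolPts Y → Type v) (U : Set Y) :
    Set (ZoomCarrier Y X) :=
  { z | Sum.elim (fun y : { y : Y // y ∉ IsolPts Y } => (y : Y) ∈ U)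
      (fun p : (i : IsolPts Y) × X i => (p.1 : Y) ∈ U) z }

/-- The topology of the zoom space `Z(Y, X)`, generated by the open subsets of the
spaces `X i` together with the sets `V_U` for `U` open in `Y`. -/
instance zoomTopology (Y : Type u) [TopologicalSpace Y] (X : IsolPts Y → Type v)
    [∀ i, TopologicalSpace (X i)] : TopologicalSpace (ZoomCarrier Y X) :=
  TopologicalSpace.generateFrom
    ({ B | ∃ (i : IsolPts Y) (W : Set (X i)), IsOpen W ∧
        B = Sum.inr '' ((Sigma.mk i) '' W) } ∪
     { B | ∃ U : Set Y, IsOpen U ∧ B = zoomVSet Y X U })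

/-- The subset of `Z(Y, X)` which is the underlying set of the zoom space `Z(Ys, A)` of
a subspace `Ys ⊆ Y` with respect to subspaces `A i ⊆ X i`
(here the isolated points of `Ys` are identified with those of `Y`). -/
def zoomSub (Y : Type u) [TopologicalSpace Y] (X : IsolPts Y → Type v) (Ys : Set Y)
    (A : ∀ i : IsolPts Y, Set (X i)) : Set (ZoomCarrier Y X) :=
  { z | Sum.elim (fun y : { y : Y // y ∉ IsolPts Y } => (y : Y) ∈ Ys)
      (fun p : (i : IsolPts Y) × X i => p.2 ∈ A p.1) z }

/-! ### Broom sets and broom spaces -/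

/-- A forking sequence: a sequence of nonempty finite sequences with pairwise distinct
first entries. -/
def IsForking (f : ℕ → List ℕ) : Prop :=
  (∀ n, f n ≠ []) ∧ ∀ ⦃m n : ℕ⦄, m ≠ n → (f m).head? ≠ (f n).head?

/-- The hierarchy of finite broom sets: `B ∈ B_α` iff `IsBroomB α B`.
`B_0 = {{∅}}`; for odd `α`, `B_α = B_{<α} ∪ {h⌢B | B ∈ B_{α-1}, h ∈ ω^{<ω}}`; for even
`α > 0`, `B_α = B_{<α} ∪ {⋃_n f_n⌢B_n | B_n ∈ B_{<α}, (f_n) a forking sequence}`. -/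
inductive IsBroomB : Ordinal.{0} → Set (List ℕ) → Prop
  | base : IsBroomB 0 {[]}
  | mono {β α : Ordinal.{0}} {B : Set (List ℕ)} : β < α → IsBroomB β B → IsBroomB α B
  | odd {β : Ordinal.{0}} {B : Set (List ℕ)} (h : List ℕ) : EvenOrd β → IsBroomB β B →
      IsBroomB (β + 1) ((fun s => h ++ s) '' B)
  | even {α : Ordinal.{0}} {f : ℕ → List ℕ} {Bs : ℕ → Set (List ℕ)}
      (g : ℕ → Ordinal.{0}) :
      0 < α → EvenOrd α → IsForking f →
      (∀ n : ℕ, g n < α) → (∀ n : ℕ, IsBroomB (g n) (Bs n)) →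
      IsBroomB α (⋃ n : ℕ, (fun s => f n ++ s) '' Bs n)

/-- The infinite sequence `s⌢ν` obtained by extending the finite sequence `s` by `ν`. -/
def seqAppend (s : List ℕ) (ν : ℕ → ℕ) : ℕ → ℕ :=
  fun k => if h : k < s.length then s.get ⟨k, h⟩ else ν (k - s.length)

/-- `A` is a broom-extension of `B`:
`A = {s⌢f^s_n⌢ν^s_n | s ∈ B, n ∈ ω}` for forking sequences `(f^s_n)_n, s ∈ B`, and
points `ν^s_n ∈ ω^ω`. -/
def IsBroomExtension (B : Set (List ℕ)) (A : Set (ℕ → ℕ)) : Prop :=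
  ∃ (f : List ℕ → ℕ → List ℕ) (ν : List ℕ → ℕ → (ℕ → ℕ)),
    (∀ s ∈ B, IsForking (f s)) ∧
    A = { σ : ℕ → ℕ | ∃ s ∈ B, ∃ n : ℕ, σ = seqAppend (s ++ f s n) (ν s n) }

/-- The hierarchy of infinite broom sets: `A ∈ A_α` iff `A` is a broom-extension of some
`B ∈ B_α`. -/
def IsBroomA (α : Ordinal.{0}) (A : Set (ℕ → ℕ)) : Prop :=
  ∃ B : Set (List ℕ), IsBroomB α B ∧ IsBroomExtension B A

/-- `u` is a finite initial segment of the infinite sequence `σ`. -/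
def InfExtends (u : List ℕ) (σ : ℕ → ℕ) : Prop := seqPrefix σ u.length = u

/-- The tree of all finite initial segments of members of a set of infinite sequences. -/
def clTrInf (S : Set (ℕ → ℕ)) : Set (List ℕ) := { u | ∃ σ ∈ S, InfExtends u σ }

/-- The broom space `T_𝒜` on `ω^ω ∪ {∞}` (with `∞ = none`): every point of `ω^ω` is
isolated, and the neighborhood subbasis at `∞` consists of the complements of single
points of `ω^ω` and of the complements of the sets `A ∈ 𝒜`. -/
def broomTop (𝒜 : Set (Set (ℕ → ℕ))) : TopologicalSpace (Option (ℕ → ℕ)) :=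
  TopologicalSpace.generateFrom
    ({ S | ∃ σ : ℕ → ℕ, S = {Option.some σ} } ∪
     { S | ∃ σ : ℕ → ℕ, S = insert Option.none (Option.some '' ({σ}ᶜ)) } ∪
     { S | ∃ A ∈ 𝒜, S = insert Option.none (Option.some '' Aᶜ) })


/-! ### Auxiliary material for the proof of Statement 8 -/

section Aux

variable {Y : Type u} [TopologicalSpace Y]

/-! #### Ordinal parity -/

theorem lt_add_one_self (x : Ordinal.{0}) : x < x + 1 := by
  rw [Ordinal.add_one_eq_succ]; exact Order.lt_succ_iff.2 le_rfl

theorem le_of_lt_add_one_ord {x y : Ordinal.{0}} (h : x < y + 1) : x ≤ y := by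
  rw [Ordinal.add_one_eq_succ] at h
  exact Order.lt_succ_iff.1 h

theorem evenOrd_or_oddOrd (a : Ordinal.{0}) : EvenOrd a ∨ OddOrd a := by
  have h : a % 2 < 2 := Ordinal.mod_lt a (by norm_num)
  have h1 : a % 2 ≤ 1 := by
    have : a % 2 < (1 : Ordinal.{0}) + 1 := by rwa [one_add_one_eq_two]
    rw [Ordinal.add_one_eq_succ] at this
    exact Order.lt_succ_iff.1 this
  rcases eq_or_lt_of_le h1 with h2 | h2
  · exact Or.inr h2
  · exact Or.inl (Ordinal.lt_one_iff_zero.1 h2)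

theorem EvenOrd.not_odd {a : Ordinal.{0}} (h : EvenOrd a) : ¬ OddOrd a := by
  intro h'
  rw [EvenOrd] at h; rw [OddOrd, h] at h'
  exact zero_ne_one h'

theorem OddOrd.ne_zero {a : Ordinal.{0}} (h : OddOrd a) : a ≠ 0 := by
  rintro rfl
  rw [OddOrd, Ordinal.zero_mod] at h
  exact zero_ne_one h

/-! #### Basic tree lemmas -/

theorem exists_append_of_prefix {t s u : List ℕ} (h : t ++ s <+: u) :
    ∃ v, u = t ++ v ∧ s <+: v := by
  obtain ⟨w, hw⟩ := h
  exact ⟨s ++ w, by rw [← hw, List.append_assoc], ⟨w, rfl⟩⟩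

theorem isTree_clTr (S : Set (List ℕ)) : IsTree (clTr S) := by
  rintro s t hst ⟨u, hu, htu⟩
  exact ⟨u, hu, hst.trans htu⟩

theorem subset_clTr (S : Set (List ℕ)) : S ⊆ clTr S :=
  fun s hs => ⟨s, hs, List.prefix_refl s⟩

theorem IsTree.clTr_eq {S : Set (List ℕ)} (hS : IsTree S) : clTr S = S :=
  subset_antisymm (by rintro u ⟨s, hs, hus⟩; exact hS hus hs) (subset_clTr S)

theorem leafDeriv_subset (S : Set (List ℕ)) : leafDeriv S ⊆ S := fun _ ht => ht.1

theorem IsTree.leafDeriv {S : Set (List ℕ)} (hS : IsTree S) : IsTree (leafDeriv S) := by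
  rintro s t hst ⟨htS, u, huS, htu, hne⟩
  refine ⟨hS hst htS, u, huS, hst.trans htu, ?_⟩
  rintro rfl
  exact hne (htu.eq_of_length (le_antisymm htu.length_le hst.length_le))

theorem IsTree.subtreeAt {T : Set (List ℕ)} (hT : IsTree T) (t : List ℕ) :
    IsTree (FBorelPaper.subtreeAt T t) := by
  intro s u hsu hu
  exact hT ((List.prefix_append_right_inj t).2 hsu) hu

theorem subtreeAt_nil (T : Set (List ℕ)) : subtreeAt T [] = T := rfl

theorem subtreeAt_empty (t : List ℕ) : subtreeAt (∅ : Set (List ℕ)) t = ∅ := by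
  ext s; simp [subtreeAt]

theorem subtreeAt_append (T : Set (List ℕ)) (t u : List ℕ) :
    subtreeAt T (t ++ u) = subtreeAt (subtreeAt T t) u := by
  ext s; simp [subtreeAt, List.append_assoc]

theorem mem_subtreeAt_nil_iff {T : Set (List ℕ)} {t : List ℕ} :
    [] ∈ subtreeAt T t ↔ t ∈ T := by
  simp [subtreeAt]

theorem IsTree.nil_mem {T : Set (List ℕ)} (hT : IsTree T) (h : T.Nonempty) : [] ∈ T := by
  obtain ⟨t, ht⟩ := h
  exact hT (List.nil_prefix) ht

theorem leafDeriv_subtreeAt (T : Set (List ℕ)) (t : List ℕ) :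
    leafDeriv (subtreeAt T t) = subtreeAt (leafDeriv T) t := by
  ext s
  constructor
  · rintro ⟨hs, u, hu, hsu, hne⟩
    refine ⟨hs, t ++ u, hu, (List.prefix_append_right_inj t).2 hsu, ?_⟩
    intro h
    exact hne (List.append_cancel_left h)
  · rintro ⟨hs, w, hw, hsw, hne⟩
    obtain ⟨v, rfl, hv⟩ := exists_append_of_prefix hsw
    refine ⟨hs, v, hw, hv, ?_⟩
    rintro rfl
    exact hne rfl

/-! #### Iterated derivatives -/

theorem iterDeriv_zero (D : Set (List ℕ) → Set (List ℕ)) (S : Set (List ℕ)) :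
    iterDeriv D S 0 = clTr S := by
  unfold iterDeriv
  rw [Ordinal.limitRecOn_zero]

theorem iterDeriv_succ (D : Set (List ℕ) → Set (List ℕ)) (S : Set (List ℕ)) (γ : Ordinal.{0}) :
    iterDeriv D S (γ + 1) = D (iterDeriv D S γ) := by
  unfold iterDeriv
  rw [Ordinal.add_one_eq_succ, Ordinal.limitRecOn_succ]

theorem iterDeriv_limit (D : Set (List ℕ) → Set (List ℕ)) (S : Set (List ℕ)) {γ : Ordinal.{0}}
    (h : Order.IsSuccLimit γ) :
    iterDeriv D S γ = ⋂ b : Ordinal.{0}, ⋂ _ : b < γ, iterDeriv D S b := by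
  unfold iterDeriv
  rw [Ordinal.limitRecOn_limit _ _ _ _ h]

theorem isTree_iterDeriv (S : Set (List ℕ)) (γ : Ordinal.{0}) :
    IsTree (iterDeriv leafDeriv S γ) := by
  induction γ using Ordinal.induction with
  | _ γ ih =>
    rcases Ordinal.zero_or_succ_or_isSuccLimit γ with rfl | ⟨δ, rfl⟩ | hγ
    · rw [iterDeriv_zero]; exact isTree_clTr S
    · rw [← Ordinal.add_one_eq_succ, iterDeriv_succ]
      exact (ih δ (lt_add_one_self δ |>.trans_eq (Ordinal.add_one_eq_succ δ))).leafDeriv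
    · rw [iterDeriv_limit _ _ hγ]
      intro s t hst ht
      rw [Set.mem_iInter₂] at ht ⊢
      exact fun b hb => ih b hb hst (ht b hb)

theorem iterDeriv_anti (S : Set (List ℕ)) :
    ∀ γ β : Ordinal.{0}, β ≤ γ → iterDeriv leafDeriv S γ ⊆ iterDeriv leafDeriv S β := by
  intro γ
  induction γ using Ordinal.induction with
  | _ γ ih =>
    intro β hβ
    rcases eq_or_lt_of_le hβ with rfl | hβ'
    · exact subset_rfl
    rcases Ordinal.zero_or_succ_or_isSuccLimit γ with rfl | ⟨δ, rfl⟩ | hγ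
    · exact absurd hβ' (not_lt_of_ge (show (0 : Ordinal.{0}) ≤ β from zero_le))
    · rw [← Ordinal.add_one_eq_succ, iterDeriv_succ]
      refine (leafDeriv_subset _).trans (ih δ ?_ β ?_)
      · exact (lt_add_one_self δ).trans_eq (Ordinal.add_one_eq_succ δ)
      · exact Order.lt_succ_iff.1 hβ'
    · rw [iterDeriv_limit _ _ hγ]
      intro t ht
      exact (Set.mem_iInter₂.1 ht) β hβ'

theorem iterDeriv_subtreeAt {T : Set (List ℕ)} (hT : IsTree T) (t : List ℕ) (γ : Ordinal.{0}) :
    iterDeriv leafDeriv (subtreeAt T t) γ = subtreeAt (iterDeriv leafDeriv T γ) t := by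
  induction γ using Ordinal.induction with
  | _ γ ih =>
    rcases Ordinal.zero_or_succ_or_isSuccLimit γ with rfl | ⟨δ, rfl⟩ | hγ
    · rw [iterDeriv_zero, iterDeriv_zero, (hT.subtreeAt t).clTr_eq, hT.clTr_eq]
    · have hδ : δ < Order.succ δ := (lt_add_one_self δ).trans_eq (Ordinal.add_one_eq_succ δ)
      rw [← Ordinal.add_one_eq_succ, iterDeriv_succ, iterDeriv_succ, ih δ hδ,
        leafDeriv_subtreeAt]
    · rw [iterDeriv_limit leafDeriv (subtreeAt T t) hγ, iterDeriv_limit leafDeriv T hγ]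
      ext s
      have key : ∀ b, b < γ →
          (s ∈ iterDeriv leafDeriv (subtreeAt T t) b ↔ t ++ s ∈ iterDeriv leafDeriv T b) :=
        fun b hb => by rw [ih b hb]; exact Iff.rfl
      constructor
      · intro h
        exact Set.mem_iInter₂.2 fun b hb => (key b hb).1 (Set.mem_iInter₂.1 h b hb)
      · intro h
        have h' := Set.mem_iInter₂.1
          (show t ++ s ∈ ⋂ b : Ordinal.{0}, ⋂ _ : b < γ, iterDeriv leafDeriv T b from h)
        exact Set.mem_iInter₂.2 fun b hb => (key b hb).2 (h' b hb)

/-! #### Leaf rank -/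

theorem leafRank_lt_omega1_iff {S : Set (List ℕ)} :
    leafRank S < omega1 ↔
      ∃ γ : Ordinal.{0}, γ < omega1 ∧ iterDeriv leafDeriv S (γ + 1) = ∅ := by
  unfold leafRank
  split
  · next h =>
    obtain ⟨γ, hγ, hγ2⟩ := h
    have hm : γ ∈ { γ : Ordinal.{0} | iterDeriv leafDeriv S (γ + 1) = ∅ } := hγ2
    exact iff_of_true (lt_of_le_of_lt (csInf_le' hm) hγ) ⟨γ, hγ, hγ2⟩
  · next h => exact iff_of_false (lt_irrefl _) h

theorem iterDeriv_leafRank_succ {S : Set (List ℕ)} (h : leafRank S < omega1) :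
    iterDeriv leafDeriv S (leafRank S + 1) = ∅ := by
  obtain ⟨γ, hγ, hγ2⟩ := leafRank_lt_omega1_iff.1 h
  have he : leafRank S = sInf { γ : Ordinal.{0} | iterDeriv leafDeriv S (γ + 1) = ∅ } := by
    unfold leafRank
    rw [if_pos ⟨γ, hγ, hγ2⟩]
  rw [he]
  have hm : γ ∈ { γ : Ordinal.{0} | iterDeriv leafDeriv S (γ + 1) = ∅ } := hγ2
  exact csInf_mem ⟨γ, hm⟩

theorem leafRank_le_iff {S : Set (List ℕ)} {γ : Ordinal.{0}} (hγ : γ < omega1) :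
    leafRank S ≤ γ ↔ iterDeriv leafDeriv S (γ + 1) = ∅ := by
  constructor
  · intro h
    have h1 : leafRank S < omega1 := lt_of_le_of_lt h hγ
    have h2 := iterDeriv_leafRank_succ h1
    have h3 : iterDeriv leafDeriv S (γ + 1) ⊆ iterDeriv leafDeriv S (leafRank S + 1) :=
      iterDeriv_anti S (γ + 1) (leafRank S + 1) (add_le_add_left h 1)
    rw [h2] at h3
    exact Set.subset_empty_iff.1 h3
  · intro h
    have : leafRank S = sInf { γ : Ordinal.{0} | iterDeriv leafDeriv S (γ + 1) = ∅ } := by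
      unfold leafRank
      rw [if_pos ⟨γ, hγ, h⟩]
    rw [this]
    exact csInf_le' h

theorem iterDeriv_eq_empty_iff {S : Set (List ℕ)} (hS : IsTree S) (h0 : [] ∈ S)
    (hr : leafRank S < omega1) (γ : Ordinal.{0}) :
    iterDeriv leafDeriv S γ = ∅ ↔ leafRank S < γ := by
  induction γ using Ordinal.induction with
  | _ γ ih =>
    constructor
    · intro hγ
      rcases Ordinal.zero_or_succ_or_isSuccLimit γ with rfl | ⟨δ, rfl⟩ | hγl
      · rw [iterDeriv_zero] at hγ
        exact absurd (subset_clTr S h0) (by rw [hγ]; exact Set.notMem_empty _)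
      · rcases lt_or_ge δ omega1 with hδ | hδ
        · have h1 : leafRank S ≤ δ :=
            (leafRank_le_iff hδ).2 (by rwa [Ordinal.add_one_eq_succ])
          exact lt_of_le_of_lt h1 ((lt_add_one_self δ).trans_eq (Ordinal.add_one_eq_succ δ))
        · exact lt_of_lt_of_le hr (hδ.trans ((lt_add_one_self δ).trans_eq
            (Ordinal.add_one_eq_succ δ)).le)
      · by_contra hcon
        have hne : ∀ b, b < γ → iterDeriv leafDeriv S b ≠ ∅ := by
          intro b hb hbe
          exact hcon ((ih b hb).1 hbe |>.trans hb)
        have hmem : [] ∈ iterDeriv leafDeriv S γ := by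
          rw [iterDeriv_limit _ _ hγl, Set.mem_iInter₂]
          intro b hb
          exact (isTree_iterDeriv S b).nil_mem (Set.nonempty_iff_ne_empty.2 (hne b hb))
        rw [hγ] at hmem
        exact hmem
    · intro h
      have h1 := iterDeriv_leafRank_succ hr
      have h2 : iterDeriv leafDeriv S γ ⊆ iterDeriv leafDeriv S (leafRank S + 1) := by
        refine iterDeriv_anti S γ (leafRank S + 1) ?_
        rwa [Ordinal.add_one_eq_succ, Order.succ_le_iff]
      rw [h1] at h2
      exact Set.subset_empty_iff.1 h2

theorem leafRank_subtreeAt_le {T : Set (List ℕ)} (hT : IsTree T) (hr : leafRank T < omega1)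
    (t : List ℕ) : leafRank (subtreeAt T t) ≤ leafRank T := by
  rw [leafRank_le_iff hr, iterDeriv_subtreeAt hT, iterDeriv_leafRank_succ hr]
  exact subtreeAt_empty t

theorem leafRank_subtreeAt_lt {T : Set (List ℕ)} (hT : IsTree T) (hr : leafRank T < omega1)
    {t : List ℕ} {n : ℕ} (hn : t ++ [n] ∈ T) :
    leafRank (subtreeAt T (t ++ [n])) < leafRank (subtreeAt T t) := by
  have hSr : leafRank (subtreeAt T t) < omega1 :=
    lt_of_le_of_lt (leafRank_subtreeAt_le hT hr t) hr
  have hρω : leafRank (subtreeAt T (t ++ [n])) < omega1 :=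
    lt_of_le_of_lt (leafRank_subtreeAt_le hT hr _) hr
  set ρ := leafRank (subtreeAt T (t ++ [n])) with hρdef
  have h1 : iterDeriv leafDeriv (subtreeAt T (t ++ [n])) ρ ≠ ∅ := by
    intro h
    exact absurd
      ((iterDeriv_eq_empty_iff (hT.subtreeAt _) (mem_subtreeAt_nil_iff.2 hn) hρω ρ).1 h)
      (lt_irrefl ρ)
  rw [subtreeAt_append T t [n], iterDeriv_subtreeAt (hT.subtreeAt t)] at h1
  have h2 : [n] ∈ iterDeriv leafDeriv (subtreeAt T t) ρ := by
    have h3 := ((isTree_iterDeriv (subtreeAt T t) ρ).subtreeAt [n]).nil_mem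
      (Set.nonempty_iff_ne_empty.2 h1)
    rw [mem_subtreeAt_nil_iff] at h3
    exact h3
  have h3 : [] ∈ iterDeriv leafDeriv (subtreeAt T t) ρ :=
    (isTree_iterDeriv _ ρ) List.nil_prefix h2
  have h4 : [] ∈ iterDeriv leafDeriv (subtreeAt T t) (ρ + 1) := by
    rw [iterDeriv_succ]
    exact ⟨h3, [n], h2, List.nil_prefix, by simp⟩
  by_contra hle
  push_neg at hle
  have h5 := (leafRank_le_iff hρω).1 hle
  rw [h5] at h4
  exact h4

theorem rank_induction {T : Set (List ℕ)} (hT : IsTree T) (hr : leafRank T < omega1)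
    (P : List ℕ → Prop)
    (step : ∀ t, t ∈ T → (∀ n : ℕ, t ++ [n] ∈ T → P (t ++ [n])) → P t) :
    ∀ t ∈ T, P t := by
  have key : ∀ γ : Ordinal.{0}, ∀ t ∈ T, leafRank (subtreeAt T t) ≤ γ → P t := by
    intro γ
    induction γ using Ordinal.induction with
    | _ γ ih =>
      intro t ht hle
      refine step t ht fun n hn => ?_
      exact ih _ (lt_of_lt_of_le (leafRank_subtreeAt_lt hT hr hn) hle) _ hn le_rfl
  exact fun t ht => key _ t ht le_rfl

theorem clTr_singleton_nil : clTr {([] : List ℕ)} = {([] : List ℕ)} := by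
  ext u
  simp only [clTr, Set.mem_singleton_iff, Set.mem_setOf_eq]
  constructor
  · rintro ⟨s, rfl, hus⟩
    exact List.prefix_nil.1 hus
  · rintro rfl
    exact ⟨[], rfl, List.prefix_refl _⟩

theorem leafDeriv_singleton_nil : leafDeriv {([] : List ℕ)} = ∅ := by
  ext t
  simp only [FBorelPaper.leafDeriv, Set.mem_singleton_iff, Set.mem_setOf_eq,
    Set.mem_empty_iff_false, iff_false, not_and]
  rintro rfl ⟨s, rfl, _, hne⟩
  exact hne rfl

theorem leafRank_singleton_nil : leafRank {([] : List ℕ)} = 0 := by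
  have h1 : iterDeriv leafDeriv {([] : List ℕ)} (0 + 1) = ∅ := by
    rw [iterDeriv_succ, iterDeriv_zero, clTr_singleton_nil, leafDeriv_singleton_nil]
  exact le_antisymm ((leafRank_le_iff (Ordinal.omega_pos 1)).2 h1) (show (0 : Ordinal.{0}) ≤ _ from zero_le)

theorem IsLeafOf.subtreeAt_eq {T : Set (List ℕ)} {t : List ℕ} (hT : IsTree T)
    (h : IsLeafOf T t) : subtreeAt T t = {([] : List ℕ)} := by
  ext s
  simp only [FBorelPaper.subtreeAt, Set.mem_setOf_eq, Set.mem_singleton_iff]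
  constructor
  · intro hs
    cases s with
    | nil => rfl
    | cons m s' =>
      exact absurd (hT ((List.prefix_append_right_inj t).2
        (List.cons_prefix_cons.2 ⟨rfl, List.nil_prefix⟩)) hs) (h.2 m)
  · rintro rfl
    rw [List.append_nil]
    exact h.1

/-! #### Canonical extension of a leaf scheme -/

def schemeExt (Y : Type u) [TopologicalSpace Y] (T : Set (List ℕ)) (hT : IsTree T)
    (hr : leafRank T < omega1) (H : List ℕ → Set Y) : List ℕ → Set Y :=
  WellFounded.fix (InvImage.wf (fun t => leafRank (subtreeAt T t)) Ordinal.lt_wf)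
    (fun t ih =>
      if IsLeafOf T t then H t
      else if OddOrd (leafRank (subtreeAt T t)) then
        ⋃ n : ℕ, ⋃ h : t ++ [n] ∈ T, ih (t ++ [n]) (leafRank_subtreeAt_lt hT hr h)
      else
        ⋂ n : ℕ, ⋂ h : t ++ [n] ∈ T, ih (t ++ [n]) (leafRank_subtreeAt_lt hT hr h))

theorem schemeExt_eq {T : Set (List ℕ)} (hT : IsTree T) (hr : leafRank T < omega1)
    (H : List ℕ → Set Y) (t : List ℕ) :
    schemeExt Y T hT hr H t =
      if IsLeafOf T t then H t
      else if OddOrd (leafRank (subtreeAt T t)) then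
        ⋃ n : ℕ, ⋃ _ : t ++ [n] ∈ T, schemeExt Y T hT hr H (t ++ [n])
      else
        ⋂ n : ℕ, ⋂ _ : t ++ [n] ∈ T, schemeExt Y T hT hr H (t ++ [n]) := by
  unfold schemeExt
  rw [WellFounded.fix_eq]

theorem isSchemeExtension_schemeExt {T : Set (List ℕ)} (hT : IsTree T)
    (hr : leafRank T < omega1) (H : List ℕ → Set Y) :
    IsSchemeExtension Y T H (schemeExt Y T hT hr H) := by
  refine ⟨fun t ht => by rw [schemeExt_eq hT hr H t, if_pos ht], ?_, ?_⟩
  · intro t _ htl hodd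
    rw [schemeExt_eq hT hr H t, if_neg htl, if_pos hodd]
    rfl
  · intro t _ htl heven
    rw [schemeExt_eq hT hr H t, if_neg htl, if_neg heven.not_odd]
    rfl

/-! #### Basic facts about `FBorel` -/

theorem fborel_def (a : Ordinal.{0}) :
    FBorel Y a =
      if a = 0 then { F : Set Y | IsClosed F }
      else if EvenOrd a then
        { S : Set Y | ∃ f : ℕ → Set Y, (∀ n, ∃ b, ∃ _ : b < a, f n ∈ FBorel Y b) ∧
          S = ⋂ n, f n }
      else
        { S : Set Y | ∃ f : ℕ → Set Y, (∀ n, ∃ b, ∃ _ : b < a, f n ∈ FBorel Y b) ∧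
          S = ⋃ n, f n } := by
  unfold FBorel
  rw [WellFounded.fix_eq]

theorem fborel_zero : FBorel Y 0 = { F : Set Y | IsClosed F } := by
  rw [fborel_def]; simp

theorem fborel_even {a : Ordinal.{0}} (h0 : a ≠ 0) (he : EvenOrd a) :
    FBorel Y a = { S : Set Y | ∃ f : ℕ → Set Y,
      (∀ n, ∃ b, ∃ _ : b < a, f n ∈ FBorel Y b) ∧ S = ⋂ n, f n } := by
  rw [fborel_def, if_neg h0, if_pos he]

theorem fborel_odd {a : Ordinal.{0}} (ho : OddOrd a) :
    FBorel Y a = { S : Set Y | ∃ f : ℕ → Set Y,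
      (∀ n, ∃ b, ∃ _ : b < a, f n ∈ FBorel Y b) ∧ S = ⋃ n, f n } := by
  rw [fborel_def, if_neg ho.ne_zero, if_neg (fun he => EvenOrd.not_odd he ho)]

theorem isClosed_mem_fborel {F : Set Y} (hF : IsClosed F) (a : Ordinal.{0}) :
    F ∈ FBorel Y a := by
  rcases eq_or_ne a 0 with rfl | h0
  · rw [fborel_zero]; exact hF
  have hbase : F ∈ FBorel Y 0 := by rw [fborel_zero]; exact hF
  have hpos : (0 : Ordinal.{0}) < a := pos_iff_ne_zero.2 h0
  rcases evenOrd_or_oddOrd a with he | ho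
  · rw [fborel_even h0 he]
    exact ⟨fun _ => F, fun _ => ⟨0, hpos, hbase⟩, (Set.iInter_const F).symm⟩
  · rw [fborel_odd ho]
    exact ⟨fun _ => F, fun _ => ⟨0, hpos, hbase⟩, (Set.iUnion_const F).symm⟩

theorem fborel_mono {a b : Ordinal.{0}} (hab : b ≤ a) : FBorel Y b ⊆ FBorel Y a := by
  rcases eq_or_lt_of_le hab with rfl | h
  · exact subset_rfl
  intro S hS
  have h0 : a ≠ 0 := pos_iff_ne_zero.1 (lt_of_le_of_lt (show (0 : Ordinal.{0}) ≤ b from zero_le) h)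
  rcases evenOrd_or_oddOrd a with he | ho
  · rw [fborel_even h0 he]
    exact ⟨fun _ => S, fun _ => ⟨b, h, hS⟩, (Set.iInter_const S).symm⟩
  · rw [fborel_odd ho]
    exact ⟨fun _ => S, fun _ => ⟨b, h, hS⟩, (Set.iUnion_const S).symm⟩

/-! #### Facts about `canonIdx` -/

theorem canonIdx_succ (b : Ordinal.{0}) (n : ℕ) : canonIdx (b + 1) n = b := by
  have hs : ∃ c : Ordinal.{0}, b + 1 = c + 1 := ⟨b, rfl⟩
  rw [canonIdx, dif_pos hs]
  have e := hs.choose_spec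
  exact le_antisymm
    (le_of_lt_add_one_ord (lt_of_lt_of_eq (lt_add_one_self _) e.symm))
    (le_of_lt_add_one_ord (lt_of_lt_of_eq (lt_add_one_self b) e))

theorem canonIdx_limit {a : Ordinal.{0}} (ha : Order.IsSuccLimit a) (ha1 : a < omega1) :
    Function.Injective (canonIdx a) ∧ ∀ b, b < a → ∃ n, canonIdx a n = b := by
  have hns : ¬∃ b : Ordinal.{0}, a = b + 1 := by
    rintro ⟨b, rfl⟩
    rw [Ordinal.add_one_eq_succ] at ha
    exact Order.not_isSuccLimit_succ b ha
  have hcard : a.card < Cardinal.aleph 1 := by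
    rw [← Cardinal.lt_ord, Cardinal.ord_aleph]
    exact ha1
  have hcount : Countable (Set.Iio a) := by
    rw [Set.countable_coe_iff, Cardinal.countable_iff_lt_aleph_one, Ordinal.mk_Iio_ordinal,
      Cardinal.lift_lt_aleph_one]
    exact hcard
  have hinf : Infinite (Set.Iio a) := by
    have hω : (Ordinal.omega0 : Ordinal.{0}) ≤ a := Ordinal.omega0_le_of_isSuccLimit ha
    refine Infinite.of_injective
      (fun n : ℕ => (⟨(n : Ordinal.{0}), lt_of_lt_of_le (Ordinal.nat_lt_omega0 n) hω⟩ :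
        Set.Iio a)) ?_
    intro m n h
    have := congrArg Subtype.val h
    simpa using this
  have hf : ∃ f : ℕ → Ordinal.{0}, Function.Injective f ∧ Set.range f = Set.Iio a := by
    obtain ⟨d⟩ := nonempty_denumerable (Set.Iio a)
    letI := d
    let e : ℕ ≃ Set.Iio a := (Denumerable.eqv (Set.Iio a)).symm
    refine ⟨fun n => (e n : Ordinal.{0}), fun m n h => e.injective (Subtype.val_injective h), ?_⟩
    ext x
    simp only [Set.mem_range]
    constructor
    · rintro ⟨n, rfl⟩
      exact (e n).2
    · intro hx
      exact ⟨e.symm ⟨x, hx⟩, by simp⟩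
  have hca : canonIdx a = hf.choose := by
    funext n
    rw [canonIdx, dif_neg hns, dif_pos hf]
  constructor
  · rw [hca]; exact hf.choose_spec.1
  · intro b hb
    rw [hca]
    have : b ∈ Set.range hf.choose := by rw [hf.choose_spec.2]; exact hb
    exact this

/-! #### Facts about `canonTree` -/

theorem canonTree_def (a : Ordinal.{0}) :
    canonTree a =
      if h0 : a = 0 then {([] : List ℕ)}
      else if omega1 ≤ a then Set.univ
      else {([] : List ℕ)} ∪ ⋃ n : ℕ, (List.cons n) '' canonTree (canonIdx a n) := by
  unfold canonTree
  rw [WellFounded.fix_eq]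

theorem canonTree_zero : canonTree 0 = {([] : List ℕ)} := by
  rw [canonTree_def, dif_pos rfl]

theorem canonTree_eq_of {a : Ordinal.{0}} (h0 : a ≠ 0) (h1 : a < omega1) :
    canonTree a = {([] : List ℕ)} ∪ ⋃ n : ℕ, (List.cons n) '' canonTree (canonIdx a n) := by
  rw [canonTree_def, dif_neg h0, if_neg (not_le.2 h1)]

theorem nil_mem_canonTree (a : Ordinal.{0}) : [] ∈ canonTree a := by
  rw [canonTree_def]
  split
  · rfl
  · split
    · trivial
    · exact Or.inl rfl

theorem cons_mem_canonTree_iff {a : Ordinal.{0}} (h0 : a ≠ 0) (h1 : a < omega1)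
    (n : ℕ) (s : List ℕ) :
    n :: s ∈ canonTree a ↔ s ∈ canonTree (canonIdx a n) := by
  rw [canonTree_eq_of h0 h1]
  constructor
  · rintro (h | h)
    · simp at h
    · simp only [Set.mem_iUnion, Set.mem_image] at h
      obtain ⟨m, u, hu, he⟩ := h
      obtain ⟨rfl, rfl⟩ : m = n ∧ u = s := by
        injection he with h1 h2
        exact ⟨h1, h2⟩
      exact hu
  · intro h
    exact Or.inr (Set.mem_iUnion.2 ⟨n, ⟨s, h, rfl⟩⟩)

theorem isTree_canonTree (a : Ordinal.{0}) : IsTree (canonTree a) := by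
  induction a using Ordinal.induction with
  | _ a ih =>
    rcases eq_or_ne a 0 with rfl | h0
    · rw [canonTree_zero]
      intro s t hst ht
      rw [Set.mem_singleton_iff] at ht ⊢
      subst ht
      exact List.prefix_nil.1 hst
    rcases le_or_gt omega1 a with h1 | h1
    · rw [canonTree_def, dif_neg h0, if_pos h1]
      intro s t _ _
      trivial
    · rw [canonTree_eq_of h0 h1]
      rintro s t hst (ht | ht)
      · rw [Set.mem_singleton_iff] at ht
        subst ht
        exact Or.inl (List.prefix_nil.1 hst)
      · simp only [Set.mem_iUnion, Set.mem_image] at ht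
        obtain ⟨m, u, hu, rfl⟩ := ht
        cases s with
        | nil => exact Or.inl rfl
        | cons k s' =>
          obtain ⟨rfl, hs'⟩ := List.cons_prefix_cons.1 hst
          exact Or.inr (Set.mem_iUnion.2 ⟨k, s', ih _ (canonIdx_lt h0 k) hs' hu, rfl⟩)

theorem seqPrefix_succ (σ : ℕ → ℕ) (k : ℕ) :
    seqPrefix σ (k + 1) = σ 0 :: seqPrefix (fun i => σ (i + 1)) k := by
  simp [seqPrefix, List.ofFn_succ]

theorem wellFoundedTree_canonTree {a : Ordinal.{0}} (h1 : a < omega1) :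
    WellFoundedTree (canonTree a) := by
  induction a using Ordinal.induction with
  | _ a ih =>
    rintro ⟨σ, hσ⟩
    rcases eq_or_ne a 0 with rfl | h0
    · have h := hσ 1
      rw [canonTree_zero, seqPrefix_succ] at h
      simp [seqPrefix] at h
    · refine ih (canonIdx a (σ 0)) (canonIdx_lt h0 (σ 0))
        ((canonIdx_lt h0 (σ 0)).trans h1) ⟨fun k => σ (k + 1), fun k => ?_⟩
      have h := hσ (k + 1)
      rw [seqPrefix_succ] at h
      exact (cons_mem_canonTree_iff h0 h1 _ _).1 h

theorem subtreeAt_canonTree_cons {a : Ordinal.{0}} (h0 : a ≠ 0) (h1 : a < omega1)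
    (n : ℕ) (s : List ℕ) :
    subtreeAt (canonTree a) (n :: s) = subtreeAt (canonTree (canonIdx a n)) s := by
  ext u
  simp only [FBorelPaper.subtreeAt, Set.mem_setOf_eq, List.cons_append]
  exact cons_mem_canonTree_iff h0 h1 n (s ++ u)

theorem isLeafOf_canonTree_cons {a : Ordinal.{0}} (h0 : a ≠ 0) (h1 : a < omega1)
    (n : ℕ) (s : List ℕ) :
    IsLeafOf (canonTree a) (n :: s) ↔ IsLeafOf (canonTree (canonIdx a n)) s := by
  simp only [IsLeafOf, List.cons_append, cons_mem_canonTree_iff h0 h1]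

theorem not_isLeafOf_nil_canonTree {a : Ordinal.{0}} (h0 : a ≠ 0) (h1 : a < omega1) :
    ¬ IsLeafOf (canonTree a) [] := by
  intro h
  refine h.2 0 ?_
  rw [List.nil_append]
  exact (cons_mem_canonTree_iff h0 h1 0 []).2 (nil_mem_canonTree _)

theorem leafRank_canonTree {a : Ordinal.{0}} (h1 : a < omega1) :
    leafRank (canonTree a) = a := by
  induction a using Ordinal.induction with
  | _ a ih =>
    rcases eq_or_ne a 0 with rfl | h0
    · rw [canonTree_zero]
      exact leafRank_singleton_nil
    have hT : IsTree (canonTree a) := isTree_canonTree a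
    have key1 : ∀ γ : Ordinal.{0}, ∀ n : ℕ,
        ([n] ∈ iterDeriv leafDeriv (canonTree a) γ ↔ ¬ canonIdx a n < γ) := by
      intro γ n
      have hidx := canonIdx_lt h0 n
      have hidx1 : canonIdx a n < omega1 := hidx.trans h1
      have hrsub : leafRank (canonTree (canonIdx a n)) = canonIdx a n := ih _ hidx hidx1
      have hsub : subtreeAt (canonTree a) [n] = canonTree (canonIdx a n) := by
        have h := subtreeAt_canonTree_cons h0 h1 n []
        rwa [subtreeAt_nil] at h
      have e1 : [n] ∈ iterDeriv leafDeriv (canonTree a) γ ↔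
          [] ∈ subtreeAt (iterDeriv leafDeriv (canonTree a) γ) [n] := by
        rw [mem_subtreeAt_nil_iff]
      rw [e1, ← iterDeriv_subtreeAt hT, hsub]
      constructor
      · intro hmem hlt
        have he : iterDeriv leafDeriv (canonTree (canonIdx a n)) γ = ∅ :=
          (iterDeriv_eq_empty_iff (isTree_canonTree _) (nil_mem_canonTree _)
            (by rw [hrsub]; exact hidx1) γ).2 (by rw [hrsub]; exact hlt)
        rw [he] at hmem
        exact hmem
      · intro hnlt
        have hne : iterDeriv leafDeriv (canonTree (canonIdx a n)) γ ≠ ∅ := by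
          intro h
          have := (iterDeriv_eq_empty_iff (isTree_canonTree _) (nil_mem_canonTree _)
            (by rw [hrsub]; exact hidx1) γ).1 h
          rw [hrsub] at this
          exact hnlt this
        exact (isTree_iterDeriv _ _).nil_mem (Set.nonempty_iff_ne_empty.2 hne)
    have key2 : ∀ γ : Ordinal.{0}, (iterDeriv leafDeriv (canonTree a) (γ + 1) = ∅ ↔ a ≤ γ) := by
      intro γ
      rw [iterDeriv_succ]
      constructor
      · intro h
        by_contra hlt
        push_neg at hlt
        obtain ⟨n, hn⟩ : ∃ n : ℕ, ¬ canonIdx a n < γ := by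
          rcases Ordinal.zero_or_succ_or_isSuccLimit a with rfl | ⟨b, hb⟩ | hl
          · exact absurd rfl h0
          · refine ⟨0, ?_⟩
            rw [← Ordinal.add_one_eq_succ, eq_comm] at hb
            rw [hb, canonIdx_succ]
            rw [hb, Ordinal.add_one_eq_succ] at hlt
            exact not_lt.2 (Order.lt_succ_iff.1 hlt)
          · obtain ⟨n, hn⟩ := (canonIdx_limit hl h1).2 γ hlt
            exact ⟨n, by rw [hn]; exact lt_irrefl γ⟩
        have h2 : [n] ∈ iterDeriv leafDeriv (canonTree a) γ := (key1 γ n).2 hn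
        have h3 : [] ∈ iterDeriv leafDeriv (canonTree a) γ :=
          (isTree_iterDeriv _ _) List.nil_prefix h2
        have h4 : [] ∈ FBorelPaper.leafDeriv (iterDeriv leafDeriv (canonTree a) γ) :=
          ⟨h3, [n], h2, List.nil_prefix, by simp⟩
        rw [h] at h4
        exact h4
      · intro h
        have hsub : iterDeriv leafDeriv (canonTree a) γ ⊆ {([] : List ℕ)} := by
          intro u hu
          cases u with
          | nil => rfl
          | cons m u' =>
            have hm : [m] ∈ iterDeriv leafDeriv (canonTree a) γ :=
              (isTree_iterDeriv _ _) (List.cons_prefix_cons.2 ⟨rfl, List.nil_prefix⟩) hu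
            exact absurd (lt_of_lt_of_le (canonIdx_lt h0 m) h) ((key1 γ m).1 hm)
        ext u
        simp only [Set.mem_empty_iff_false, iff_false]
        rintro ⟨hu, s, hs, hus, hne⟩
        have h1u := hsub hu
        have h2u := hsub hs
        rw [Set.mem_singleton_iff] at h1u h2u
        subst h1u
        subst h2u
        exact hne rfl
    have hex : leafRank (canonTree a) < omega1 :=
      leafRank_lt_omega1_iff.2 ⟨a, h1, (key2 a).2 le_rfl⟩
    refine le_antisymm ((leafRank_le_iff h1).2 ((key2 a).2 le_rfl)) (le_of_not_gt fun hcon => ?_)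
    have h5 := iterDeriv_leafRank_succ hex
    exact absurd ((key2 (leafRank (canonTree a))).1 h5) (not_le.2 hcon)

/-! #### The implication (ii) → (i) -/

theorem fborel_of_scheme {X : Set Y} {α : Ordinal.{0}} (hα : α < omega1)
    {T : Set (List ℕ)} {H E : List ℕ → Set Y} (hT : IsTree T) (hnil : [] ∈ T)
    (hrle : leafRank T ≤ α) (hcl : ∀ t, IsLeafOf T t → IsClosed (H t))
    (hext : IsSchemeExtension Y T H E) (hroot : E [] = X) : X ∈ FBorel Y α := by
  have hrT : leafRank T < omega1 := lt_of_le_of_lt hrle hα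
  have main : ∀ t ∈ T, E t ∈ FBorel Y (leafRank (subtreeAt T t)) := by
    refine rank_induction hT hrT _ ?_
    intro t ht ihs
    by_cases hleaf : IsLeafOf T t
    · rw [hleaf.subtreeAt_eq hT, leafRank_singleton_nil, fborel_zero, hext.1 t hleaf]
      exact hcl t hleaf
    · obtain ⟨n0, hn0⟩ : ∃ n : ℕ, t ++ [n] ∈ T := by
        by_contra hno
        push_neg at hno
        exact hleaf ⟨ht, hno⟩
      have hρω : leafRank (subtreeAt T t) < omega1 :=
        lt_of_le_of_lt (leafRank_subtreeAt_le hT hrT t) hrT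
      have hρ0 : leafRank (subtreeAt T t) ≠ 0 := by
        intro h0
        have h := leafRank_subtreeAt_lt hT hrT hn0
        rw [h0] at h
        exact not_lt_of_ge (show (0 : Ordinal.{0}) ≤ _ from zero_le) h
      set f : ℕ → Set Y := fun n => if t ++ [n] ∈ T then E (t ++ [n]) else E (t ++ [n0])
        with hf
      have hfb : ∀ n, ∃ b, ∃ _ : b < leafRank (subtreeAt T t), f n ∈ FBorel Y b := by
        intro n
        by_cases hn : t ++ [n] ∈ T
        · exact ⟨_, leafRank_subtreeAt_lt hT hrT hn,
            by rw [hf]; simp only [if_pos hn]; exact ihs n hn⟩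
        · exact ⟨_, leafRank_subtreeAt_lt hT hrT hn0,
            by rw [hf]; simp only [if_neg hn]; exact ihs n0 hn0⟩
      rcases evenOrd_or_oddOrd (leafRank (subtreeAt T t)) with he | ho
      · rw [fborel_even hρ0 he]
        refine ⟨f, hfb, ?_⟩
        rw [hext.2.2 t ht hleaf he]
        ext x
        simp only [Set.mem_iInter, Set.mem_setOf_eq]
        constructor
        · intro hx n
          rw [hf]
          by_cases hn : t ++ [n] ∈ T
          · simp only [if_pos hn]; exact hx n hn
          · simp only [if_neg hn]; exact hx n0 hn0
        · intro hx n hn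
          have h := hx n
          rw [hf] at h
          simp only [if_pos hn] at h
          exact h
      · rw [fborel_odd ho]
        refine ⟨f, hfb, ?_⟩
        rw [hext.2.1 t ht hleaf ho]
        ext x
        simp only [Set.mem_iUnion, Set.mem_setOf_eq]
        constructor
        · rintro ⟨n, hn, hx⟩
          exact ⟨n, by rw [hf]; simp only [if_pos hn]; exact hx⟩
        · rintro ⟨n, hx⟩
          rw [hf] at hx
          by_cases hn : t ++ [n] ∈ T
          · simp only [if_pos hn] at hx
            exact ⟨n, hn, hx⟩
          · simp only [if_neg hn] at hx
            exact ⟨n0, hn0, hx⟩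
  have h := main [] hnil
  rw [subtreeAt_nil] at h
  rw [← hroot]
  exact fborel_mono hrle h

/-! #### The implication (i) → (iii) -/

theorem exists_placement {α : Ordinal.{0}} (hl : Order.IsSuccLimit α) (hα : α < omega1)
    (b : ℕ → Ordinal.{0}) (hb : ∀ n, b n < α) :
    ∃ m : ℕ → ℕ, Function.Injective m ∧ ∀ n, b n ≤ canonIdx α (m n) := by
  obtain ⟨hinj, hsurj⟩ := canonIdx_limit hl hα
  set γseq : ℕ → Ordinal.{0} :=
    fun n => Nat.rec (b 0) (fun k ihk => max (b (k + 1)) (ihk + 1)) n with hγseq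
  have hγ0 : γseq 0 = b 0 := rfl
  have hγsucc : ∀ k, γseq (k + 1) = max (b (k + 1)) (γseq k + 1) := fun _ => rfl
  have hγlt : ∀ n, γseq n < α := by
    intro n
    induction n with
    | zero => rw [hγ0]; exact hb 0
    | succ k ihk =>
      rw [hγsucc]
      refine max_lt (hb (k + 1)) ?_
      have h := hl.succ_lt ihk
      rwa [← Ordinal.add_one_eq_succ] at h
  have hbγ : ∀ n, b n ≤ γseq n := by
    intro n
    cases n with
    | zero => exact le_of_eq hγ0.symm
    | succ k => rw [hγsucc]; exact le_max_left _ _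
  have hγmono : StrictMono γseq := by
    refine strictMono_nat_of_lt_succ fun n => ?_
    rw [hγsucc]
    exact lt_of_lt_of_le (lt_add_one_self _) (le_max_right _ _)
  choose m hm using fun n => hsurj (γseq n) (hγlt n)
  refine ⟨m, ?_, ?_⟩
  · intro i j h
    exact hγmono.injective (by rw [← hm i, ← hm j, h])
  · intro n
    rw [hm n]
    exact hbγ n

theorem exists_decomposition {α : Ordinal.{0}} (h0 : α ≠ 0) (hα : α < omega1) {X : Set Y}
    (hX : X ∈ FBorel Y α) :
    ∃ G : ℕ → Set Y, (∀ n, G n ∈ FBorel Y (canonIdx α n)) ∧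
      (EvenOrd α → X = ⋂ n, G n) ∧ (OddOrd α → X = ⋃ n, G n) := by
  rcases Ordinal.zero_or_succ_or_isSuccLimit α with rfl | ⟨b, hb⟩ | hl
  · exact absurd rfl h0
  · rw [← Ordinal.add_one_eq_succ, eq_comm] at hb
    have hidx : ∀ n : ℕ, canonIdx α n = b := fun n => by rw [hb, canonIdx_succ]
    have hmono : ∀ c : Ordinal.{0}, c < α → FBorel Y c ⊆ FBorel Y b := by
      intro c hc
      refine fborel_mono (le_of_lt_add_one_ord ?_)
      rwa [← hb]
    rcases evenOrd_or_oddOrd α with he | ho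
    · rw [fborel_even h0 he] at hX
      obtain ⟨f, hf, rfl⟩ := hX
      refine ⟨f, fun n => ?_, fun _ => rfl, fun hodd => absurd hodd he.not_odd⟩
      obtain ⟨c, hc, hfc⟩ := hf n
      rw [hidx n]
      exact hmono c hc hfc
    · rw [fborel_odd ho] at hX
      obtain ⟨f, hf, rfl⟩ := hX
      refine ⟨f, fun n => ?_, fun heven => absurd ho heven.not_odd, fun _ => rfl⟩
      obtain ⟨c, hc, hfc⟩ := hf n
      rw [hidx n]
      exact hmono c hc hfc
  · rcases evenOrd_or_oddOrd α with he | ho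
    · rw [fborel_even h0 he] at hX
      obtain ⟨f, hf, rfl⟩ := hX
      choose b hb hfb using hf
      obtain ⟨m, hminj, hmle⟩ := exists_placement hl hα b hb
      refine ⟨fun k => if h : ∃ n, m n = k then f h.choose else Set.univ, fun k => ?_,
        fun _ => ?_, fun hodd => absurd hodd he.not_odd⟩
      · by_cases h : ∃ n, m n = k
        · simp only [dif_pos h]
          have he' : b h.choose ≤ canonIdx α k := by
            have hh := hmle h.choose
            rwa [h.choose_spec] at hh
          exact fborel_mono he' (hfb h.choose)
        · simp only [dif_neg h]
          exact isClosed_mem_fborel isClosed_univ _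
      · ext x
        simp only [Set.mem_iInter]
        constructor
        · intro hx k
          by_cases h : ∃ n, m n = k
          · simp only [dif_pos h]; exact hx h.choose
          · simp only [dif_neg h]; trivial
        · intro hx n
          have h := hx (m n)
          have hh : ∃ n', m n' = m n := ⟨n, rfl⟩
          rw [dif_pos hh] at h
          rwa [hminj hh.choose_spec] at h
    · rw [fborel_odd ho] at hX
      obtain ⟨f, hf, rfl⟩ := hX
      choose b hb hfb using hf
      obtain ⟨m, hminj, hmle⟩ := exists_placement hl hα b hb
      refine ⟨fun k => if h : ∃ n, m n = k then f h.choose else ∅, fun k => ?_,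
        fun heven => absurd ho heven.not_odd, fun _ => ?_⟩
      · by_cases h : ∃ n, m n = k
        · simp only [dif_pos h]
          have he' : b h.choose ≤ canonIdx α k := by
            have hh := hmle h.choose
            rwa [h.choose_spec] at hh
          exact fborel_mono he' (hfb h.choose)
        · simp only [dif_neg h]
          exact isClosed_mem_fborel isClosed_empty _
      · ext x
        simp only [Set.mem_iUnion]
        constructor
        · rintro ⟨n, hx⟩
          refine ⟨m n, ?_⟩
          have hh : ∃ n', m n' = m n := ⟨n, rfl⟩
          rw [dif_pos hh, hminj hh.choose_spec]
          exact hx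
        · rintro ⟨k, hx⟩
          by_cases h : ∃ n, m n = k
          · rw [dif_pos h] at hx
            exact ⟨h.choose, hx⟩
          · rw [dif_neg h] at hx
            exact absurd hx (Set.notMem_empty x)

theorem scheme_of_fborel {α : Ordinal.{0}} (hα : α < omega1) :
    ∀ X : Set Y, X ∈ FBorel Y α →
      ∃ H E : List ℕ → Set Y, (∀ t, IsLeafOf (canonTree α) t → IsClosed (H t)) ∧
        IsSchemeExtension Y (canonTree α) H E ∧ E [] = X := by
  induction α using Ordinal.induction with
  | _ α ihα =>
    intro X hX
    rcases eq_or_ne α 0 with rfl | h0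
    · rw [fborel_zero] at hX
      have hleaf : IsLeafOf (canonTree 0) [] := by
        refine ⟨nil_mem_canonTree 0, fun n h => ?_⟩
        rw [canonTree_zero] at h
        simp at h
      refine ⟨fun _ => X, fun _ => X, fun _ _ => hX, ⟨fun _ _ => rfl, ?_, ?_⟩, rfl⟩
      · intro t ht hnl _
        exfalso
        rw [canonTree_zero, Set.mem_singleton_iff] at ht
        subst ht
        exact hnl hleaf
      · intro t ht hnl _
        exfalso
        rw [canonTree_zero, Set.mem_singleton_iff] at ht
        subst ht
        exact hnl hleaf
    · obtain ⟨G, hG, hGe, hGo⟩ := exists_decomposition h0 (hα := hα) hX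
      have hsub : ∀ n : ℕ, ∃ H E : List ℕ → Set Y,
          (∀ t, IsLeafOf (canonTree (canonIdx α n)) t → IsClosed (H t)) ∧
          IsSchemeExtension Y (canonTree (canonIdx α n)) H E ∧ E [] = G n :=
        fun n => ihα _ (canonIdx_lt h0 n) ((canonIdx_lt h0 n).trans hα) _ (hG n)
      choose H' E' hcl' hext' hroot' using hsub
      refine ⟨fun t => match t with | [] => ∅ | n :: s => H' n s,
              fun t => match t with | [] => X | n :: s => E' n s, ?_, ⟨?_, ?_, ?_⟩, rfl⟩
      · -- closedness on leaves
        intro t ht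
        match t with
        | [] => exact absurd ht (not_isLeafOf_nil_canonTree h0 hα)
        | n :: s => exact hcl' n s ((isLeafOf_canonTree_cons h0 hα n s).1 ht)
      · -- leaf values
        intro t ht
        match t with
        | [] => exact absurd ht (not_isLeafOf_nil_canonTree h0 hα)
        | n :: s => exact (hext' n).1 s ((isLeafOf_canonTree_cons h0 hα n s).1 ht)
      · -- odd nodes
        intro t ht hnl hodd
        match t with
        | [] =>
          rw [subtreeAt_nil, leafRank_canonTree hα] at hodd
          have hXU : X = ⋃ n, G n := hGo hodd
          have hmemall : ∀ n : ℕ, ([] : List ℕ) ++ [n] ∈ canonTree α := fun n =>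
            (cons_mem_canonTree_iff h0 hα n []).2 (nil_mem_canonTree _)
          show X = ⋃ n ∈ { n : ℕ | ([] : List ℕ) ++ [n] ∈ canonTree α }, E' n []
          rw [hXU]
          ext x
          simp only [Set.mem_iUnion, Set.mem_setOf_eq]
          constructor
          · rintro ⟨n, hx⟩
            refine ⟨n, hmemall n, ?_⟩
            rw [hroot' n]
            exact hx
          · rintro ⟨n, _, hx⟩
            refine ⟨n, ?_⟩
            rw [← hroot' n]
            exact hx
        | n :: s =>
          have hs : s ∈ canonTree (canonIdx α n) := (cons_mem_canonTree_iff h0 hα n s).1 ht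
          have hnl' : ¬ IsLeafOf (canonTree (canonIdx α n)) s :=
            fun h => hnl ((isLeafOf_canonTree_cons h0 hα n s).2 h)
          rw [subtreeAt_canonTree_cons h0 hα n s] at hodd
          have hset : { m : ℕ | (n :: s) ++ [m] ∈ canonTree α } =
              { m : ℕ | s ++ [m] ∈ canonTree (canonIdx α n) } := by
            ext m
            exact cons_mem_canonTree_iff h0 hα n (s ++ [m])
          show E' n s = ⋃ m ∈ { m : ℕ | (n :: s) ++ [m] ∈ canonTree α }, E' n (s ++ [m])
          rw [hset]
          exact (hext' n).2.1 s hs hnl' hodd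
      · -- even nodes
        intro t ht hnl heven
        match t with
        | [] =>
          rw [subtreeAt_nil, leafRank_canonTree hα] at heven
          have hXI : X = ⋂ n, G n := hGe heven
          have hmemall : ∀ n : ℕ, ([] : List ℕ) ++ [n] ∈ canonTree α := fun n =>
            (cons_mem_canonTree_iff h0 hα n []).2 (nil_mem_canonTree _)
          show X = ⋂ n ∈ { n : ℕ | ([] : List ℕ) ++ [n] ∈ canonTree α }, E' n []
          rw [hXI]
          ext x
          simp only [Set.mem_iInter, Set.mem_setOf_eq]
          constructor
          · intro hx n _
            rw [hroot' n]
            exact hx n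
          · intro hx n
            rw [← hroot' n]
            exact hx n (hmemall n)
        | n :: s =>
          have hs : s ∈ canonTree (canonIdx α n) := (cons_mem_canonTree_iff h0 hα n s).1 ht
          have hnl' : ¬ IsLeafOf (canonTree (canonIdx α n)) s :=
            fun h => hnl ((isLeafOf_canonTree_cons h0 hα n s).2 h)
          rw [subtreeAt_canonTree_cons h0 hα n s] at heven
          have hset : { m : ℕ | (n :: s) ++ [m] ∈ canonTree α } =
              { m : ℕ | s ++ [m] ∈ canonTree (canonIdx α n) } := by
            ext m
            exact cons_mem_canonTree_iff h0 hα n (s ++ [m])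
          show E' n s = ⋂ m ∈ { m : ℕ | (n :: s) ++ [m] ∈ canonTree α }, E' n (s ++ [m])
          rw [hset]
          exact (hext' n).2.2 s hs hnl' heven

/-! #### The implication (iii) → (v) -/

theorem closure_scheme_of_scheme {α : Ordinal.{0}} (hα : α < omega1) {X : Set Y}
    {H E : List ℕ → Set Y} (hcl : ∀ t, IsLeafOf (canonTree α) t → IsClosed (H t))
    (hext : IsSchemeExtension Y (canonTree α) H E) (hroot : E [] = X) :
    ∃ H₂ E₂ : List ℕ → Set Y, (∀ t, IsLeafOf (canonTree α) t → H₂ t ⊆ X) ∧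
      IsSchemeExtension Y (canonTree α) (fun t => closure (H₂ t ∩ X)) E₂ ∧ E₂ [] = X := by
  have hT : IsTree (canonTree α) := isTree_canonTree α
  have hr : leafRank (canonTree α) < omega1 := by
    rw [leafRank_canonTree hα]; exact hα
  set H₂ : List ℕ → Set Y := fun t => H t ∩ X with hH₂
  set E₂ : List ℕ → Set Y := schemeExt Y (canonTree α) hT hr (fun t => closure (H₂ t ∩ X))
    with hE₂
  have hext₂ : IsSchemeExtension Y (canonTree α) (fun t => closure (H₂ t ∩ X)) E₂ :=
    isSchemeExtension_schemeExt hT hr _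
  have claim1 : ∀ t ∈ canonTree α, E₂ t ⊆ E t := by
    refine rank_induction hT hr _ ?_
    intro t ht ihs
    by_cases hleaf : IsLeafOf (canonTree α) t
    · rw [hext₂.1 t hleaf, hext.1 t hleaf]
      have hsub : closure (H₂ t ∩ X) ⊆ closure (H t) :=
        closure_mono fun x hx => hx.1.1
      rwa [(hcl t hleaf).closure_eq] at hsub
    · rcases evenOrd_or_oddOrd (leafRank (subtreeAt (canonTree α) t)) with he | ho
      · rw [hext₂.2.2 t ht hleaf he, hext.2.2 t ht hleaf he]
        exact Set.iInter₂_mono fun n hn => ihs n hn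
      · rw [hext₂.2.1 t ht hleaf ho, hext.2.1 t ht hleaf ho]
        exact Set.iUnion₂_mono fun n hn => ihs n hn
  have claim2 : ∀ x ∈ X, ∀ t ∈ canonTree α, x ∈ E t → x ∈ E₂ t := by
    intro x hx
    refine rank_induction hT hr _ ?_
    intro t ht ihs hxE
    by_cases hleaf : IsLeafOf (canonTree α) t
    · rw [hext₂.1 t hleaf]
      rw [hext.1 t hleaf] at hxE
      exact subset_closure ⟨⟨hxE, hx⟩, hx⟩
    · rcases evenOrd_or_oddOrd (leafRank (subtreeAt (canonTree α) t)) with he | ho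
      · rw [hext₂.2.2 t ht hleaf he]
        rw [hext.2.2 t ht hleaf he] at hxE
        rw [Set.mem_iInter₂] at hxE ⊢
        exact fun n hn => ihs n hn (hxE n hn)
      · rw [hext₂.2.1 t ht hleaf ho]
        rw [hext.2.1 t ht hleaf ho] at hxE
        rw [Set.mem_iUnion₂] at hxE ⊢
        obtain ⟨n, hn, hx'⟩ := hxE
        exact ⟨n, hn, ihs n hn hx'⟩
  refine ⟨H₂, E₂, fun t _ => Set.inter_subset_right, hext₂, ?_⟩
  refine Set.Subset.antisymm ((claim1 [] (nil_mem_canonTree α)).trans (le_of_eq hroot)) ?_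
  intro x hx
  exact claim2 x hx [] (nil_mem_canonTree α) (by rw [hroot]; exact hx)

end Aux
/-- Existence of simple `F_α`-representations: for `X ⊆ Y` and `α < ω₁`,
membership `X ∈ F_α(Y)` is equivalent to `X` being computed at the root by: (ii) a closed
leaf-scheme over a well-founded tree of leaf-rank `≤ α`; (iii) a closed leaf-scheme over
the canonical tree `T_α`; (iv) the scheme of closures `cl_Y(H(t) ∩ X)` of a leaf-scheme
of subsets of `X` over a tree of leaf-rank `≤ α`; (v) the scheme of closures of a
leaf-scheme of subsets of `X` over `T_α`. -/
theorem simple_representation_tfae (Y : Type u) [TopologicalSpace Y] (X : Set Y)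
    (α : Ordinal.{0}) (hα : α < omega1) :
    List.TFAE [
      X ∈ FBorel Y α,
      ∃ (T : Set (List ℕ)) (H E : List ℕ → Set Y), IsTree T ∧ WellFoundedTree T ∧
        [] ∈ T ∧ leafRank T ≤ α ∧ (∀ t, IsLeafOf T t → IsClosed (H t)) ∧
        IsSchemeExtension Y T H E ∧ E [] = X,
      ∃ H E : List ℕ → Set Y, (∀ t, IsLeafOf (canonTree α) t → IsClosed (H t)) ∧
        IsSchemeExtension Y (canonTree α) H E ∧ E [] = X,
      ∃ (T : Set (List ℕ)) (H E : List ℕ → Set Y), IsTree T ∧ WellFoundedTree T ∧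
        [] ∈ T ∧ leafRank T ≤ α ∧ (∀ t, IsLeafOf T t → H t ⊆ X) ∧
        IsSchemeExtension Y T (fun t => closure (H t ∩ X)) E ∧ E [] = X,
      ∃ H E : List ℕ → Set Y, (∀ t, IsLeafOf (canonTree α) t → H t ⊆ X) ∧
        IsSchemeExtension Y (canonTree α) (fun t => closure (H t ∩ X)) E ∧ E [] = X
    ] := by
  tfae_have 1 → 3 := fun h => scheme_of_fborel hα X h
  tfae_have 3 → 5 := by
    rintro ⟨H, E, hcl, hext, hroot⟩
    exact closure_scheme_of_scheme hα hcl hext hroot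
  tfae_have 5 → 4 := by
    rintro ⟨H, E, hsub, hext, hroot⟩
    exact ⟨canonTree α, H, E, isTree_canonTree α, wellFoundedTree_canonTree hα,
      nil_mem_canonTree α, le_of_eq (leafRank_canonTree hα), hsub, hext, hroot⟩
  tfae_have 4 → 2 := by
    rintro ⟨T, H, E, hT, hwf, hnil, hrk, hsub, hext, hroot⟩
    exact ⟨T, fun t => closure (H t ∩ X), E, hT, hwf, hnil, hrk,
      fun t _ => isClosed_closure, hext, hroot⟩
  tfae_have 2 → 1 := by
    rintro ⟨T, H, E, hT, hwf, hnil, hrk, hcl, hext, hroot⟩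
    exact fborel_of_scheme hα hT hnil hrk hcl hext hroot
  tfae_finish

end FBorelPaper
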